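/- Let H₀ be a complex Hilbert space, B ∈ B(H₀) with 0 ≤ B ≤ I and ker B = ker(I−B) = {0}, and let P and Q be the orthogonal projections of H = H₀ ⊕ H₀ onto N = {(u, Bu) : u ∈ H₀} and M = {(u, −Bu) : u ∈ H₀}, respectively. Then for all unit vectors x₁, y₂ ∈ H₀, setting x = (x₁, 0) and y = (0, y₂), one has ‖P^⊥x‖² + ‖Py‖² ≥ (1/4)‖By₂‖² and ‖Q^⊥x‖² + ‖Qy‖² ≥ (1/4)‖By₂‖²; consequently ‖(I−L)x‖² + ‖Ly‖² ≥ (1/4)‖By₂‖² for every L ∈ {0, P, Q, I}. -/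

import Mathlib

noncomputable section

variable {H₀ : Type*} [NormedAddCommGroup H₀] [InnerProductSpace ℂ H₀] [CompleteSpace H₀]

/-- The operator on `H₀ ⊕ H₀ = WithLp 2 (H₀ × H₀)` given by the block matrix
`[[A, B], [C, D]]`. -/
def blk (A B C D : H₀ →L[ℂ] H₀) : WithLp 2 (H₀ × H₀) →L[ℂ] WithLp 2 (H₀ × H₀) :=
  (((WithLp.prodContinuousLinearEquiv 2 ℂ H₀ H₀).symm :
      H₀ × H₀ →L[ℂ] WithLp 2 (H₀ × H₀)) ∘L ((A.coprod B).prod (C.coprod D))) ∘L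
    ((WithLp.prodContinuousLinearEquiv 2 ℂ H₀ H₀) : WithLp 2 (H₀ × H₀) →L[ℂ] H₀ × H₀)

/-- The vector `(u, v) ∈ H₀ ⊕ H₀`. -/
def vec₂ (u v : H₀) : WithLp 2 (H₀ × H₀) := (WithLp.equiv 2 (H₀ × H₀)).symm (u, v)

lemma blk_apply (A B C D : H₀ →L[ℂ] H₀) (u v : H₀) :
    blk A B C D (vec₂ u v) = vec₂ (A u + B v) (C u + D v) := rfl

lemma vec₂_norm_sq (u v : H₀) : ‖vec₂ u v‖ ^ 2 = ‖u‖ ^ 2 + ‖v‖ ^ 2 :=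
  WithLp.prod_norm_sq_eq_of_L2 _

theorem norms_of_vector_functionals_stmt18
    (B : H₀ →L[ℂ] H₀) (hBpos : B.IsPositive) (hB1 : ((1 : H₀ →L[ℂ] H₀) - B).IsPositive)
    (hkerB : LinearMap.ker (B : H₀ →ₗ[ℂ] H₀) = ⊥) (hker1B : LinearMap.ker (((1 : H₀ →L[ℂ] H₀) - B : H₀ →L[ℂ] H₀) : H₀ →ₗ[ℂ] H₀) = ⊥)
    (G : H₀ →L[ℂ] H₀) (hG1 : G * (1 + B * B) = 1) (hG2 : (1 + B * B) * G = 1)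
    (x₁ y₂ : H₀) (hx₁ : ‖x₁‖ = 1) (hy₂ : ‖y₂‖ = 1) :
    let P : WithLp 2 (H₀ × H₀) →L[ℂ] WithLp 2 (H₀ × H₀) :=
      blk G 0 0 G * blk 1 B B (B * B)
    let Q : WithLp 2 (H₀ × H₀) →L[ℂ] WithLp 2 (H₀ × H₀) :=
      blk G 0 0 G * blk 1 (-B) (-B) (B * B)
    let x := vec₂ x₁ 0
    let y := vec₂ 0 y₂
    ‖x - P x‖ ^ 2 + ‖P y‖ ^ 2 ≥ 1 / 4 * ‖B y₂‖ ^ 2 ∧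
    ‖x - Q x‖ ^ 2 + ‖Q y‖ ^ 2 ≥ 1 / 4 * ‖B y₂‖ ^ 2 ∧
    ∀ L ∈ ({0, P, Q, 1} : Set (WithLp 2 (H₀ × H₀) →L[ℂ] WithLp 2 (H₀ × H₀))),
      ‖x - L x‖ ^ 2 + ‖L y‖ ^ 2 ≥ 1 / 4 * ‖B y₂‖ ^ 2 := by
  intro P Q x y
  -- ‖B‖ ≤ 1
  have hBnorm : ‖B‖ ≤ 1 := by
    rw [CStarAlgebra.norm_le_one_iff_of_nonneg B
      ((ContinuousLinearMap.nonneg_iff_isPositive B).2 hBpos), ← sub_nonneg]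
    exact (ContinuousLinearMap.nonneg_iff_isPositive _).2 hB1
  have hBv : ∀ v : H₀, ‖B v‖ ≤ ‖v‖ := fun v =>
    (B.le_opNorm v).trans (by nlinarith [norm_nonneg v])
  -- ‖w‖ ≤ 2 ‖G w‖
  have hGw : ∀ w : H₀, ‖w‖ ≤ 2 * ‖G w‖ := by
    intro w
    have h1 : (1 + B * B) (G w) = w := by
      rw [← ContinuousLinearMap.mul_apply, hG2, ContinuousLinearMap.one_apply]
    have h2 : w = G w + B (B (G w)) := by
      conv_lhs => rw [← h1]
      simp [ContinuousLinearMap.mul_apply]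
    calc ‖w‖ = ‖G w + B (B (G w))‖ := by rw [← h2]
      _ ≤ ‖G w‖ + ‖B (B (G w))‖ := norm_add_le _ _
      _ ≤ ‖G w‖ + ‖G w‖ := by
          have := (hBv (B (G w))).trans (hBv (G w)); linarith
      _ = 2 * ‖G w‖ := by ring
  have hkey : ∀ w : H₀, 1 / 4 * ‖w‖ ^ 2 ≤ ‖G w‖ ^ 2 := by
    intro w
    have := hGw w
    nlinarith [norm_nonneg w, norm_nonneg (G w)]
  -- compute P y and Q y
  have hPy : P y = vec₂ (G (B y₂)) (G (B (B y₂))) := by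
    show blk G 0 0 G (blk 1 B B (B * B) (vec₂ 0 y₂)) = _
    rw [blk_apply, blk_apply]
    simp [ContinuousLinearMap.mul_apply]
  have hQy : Q y = vec₂ (G (-(B y₂))) (G (B (B y₂))) := by
    show blk G 0 0 G (blk 1 (-B) (-B) (B * B) (vec₂ 0 y₂)) = _
    rw [blk_apply, blk_apply]
    simp [ContinuousLinearMap.mul_apply]
  have hPyn : 1 / 4 * ‖B y₂‖ ^ 2 ≤ ‖P y‖ ^ 2 := by
    rw [hPy, vec₂_norm_sq]
    have := hkey (B y₂)
    nlinarith [norm_nonneg (G (B (B y₂))), sq_nonneg ‖G (B (B y₂))‖]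
  have hQyn : 1 / 4 * ‖B y₂‖ ^ 2 ≤ ‖Q y‖ ^ 2 := by
    rw [hQy, vec₂_norm_sq, map_neg, norm_neg]
    have := hkey (B y₂)
    nlinarith [sq_nonneg ‖G (B (B y₂))‖]
  have hP : ‖x - P x‖ ^ 2 + ‖P y‖ ^ 2 ≥ 1 / 4 * ‖B y₂‖ ^ 2 := by
    have := sq_nonneg ‖x - P x‖; linarith
  have hQ : ‖x - Q x‖ ^ 2 + ‖Q y‖ ^ 2 ≥ 1 / 4 * ‖B y₂‖ ^ 2 := by
    have := sq_nonneg ‖x - Q x‖; linarith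
  have hBy2 : ‖B y₂‖ ^ 2 ≤ 1 := by
    have := hBv y₂; rw [hy₂] at this; nlinarith [norm_nonneg (B y₂)]
  have hxn : ‖x‖ ^ 2 = 1 := by
    show ‖vec₂ x₁ 0‖ ^ 2 = 1; rw [vec₂_norm_sq, hx₁]; simp
  have hyn : ‖y‖ ^ 2 = 1 := by
    show ‖vec₂ 0 y₂‖ ^ 2 = 1; rw [vec₂_norm_sq, hy₂]; simp
  refine ⟨hP, hQ, ?_⟩
  rintro L (rfl | rfl | rfl | rfl)
  · simp only [ContinuousLinearMap.zero_apply, sub_zero, norm_zero]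
    rw [hxn]; nlinarith
  · exact hP
  · exact hQ
  · simp only [ContinuousLinearMap.one_apply, sub_self, norm_zero]
    rw [hyn]; nlinarith
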